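/- Let 0 < q₁ < p₁ ≤ 1, 0 < q₂ < p₂ ≤ 1 and let n, m ≥ 1 be natural numbers. Then for all (x,y) ∈ [0,1]², the bivariate (p,q)-Bernstein operator satisfies: B_{n,m}(1;x,y) = 1; B_{n,m}((s,t) ↦ s; x,y) = x; B_{n,m}((s,t) ↦ t; x,y) = y; B_{n,m}((s,t) ↦ st; x,y) = xy; B_{n,m}((s,t) ↦ s²; x,y) = (p₁^{n-1}/[n]_{p₁,q₁}) x + (q₁ [n-1]_{p₁,q₁}/[n]_{p₁,q₁}) x²; and B_{n,m}((s,t) ↦ t²; x,y) = (p₂^{m-1}/[m]_{p₂,q₂}) y + (q₂ [m-1]_{p₂,q₂}/[m]_{p₂,q₂}) y². -/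

import Mathlib

open Finset Set Filter Topology

/-- The (p,q)-integer `[n]_{p,q} = ∑_{i=0}^{n-1} p^(n-1-i) q^i`. -/
noncomputable def pqInt (p q : ℝ) (n : ℕ) : ℝ :=
  ∑ i ∈ Finset.range n, p ^ (n - 1 - i) * q ^ i

/-- The (p,q)-factorial `[n]_{p,q}! = ∏_{j=1}^n [j]_{p,q}`. -/
noncomputable def pqFactorial (p q : ℝ) (n : ℕ) : ℝ :=
  ∏ j ∈ Finset.range n, pqInt p q (j + 1)

/-- The (p,q)-binomial coefficient. -/
noncomputable def pqChoose (p q : ℝ) (n k : ℕ) : ℝ :=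
  pqFactorial p q n / (pqFactorial p q k * pqFactorial p q (n - k))

/-- The node `p^(n-k) [k]_{p,q} / [n]_{p,q}` of the (p,q)-Bernstein operator. -/
noncomputable def pqNode (p q : ℝ) (n k : ℕ) : ℝ :=
  p ^ (n - k) * pqInt p q k / pqInt p q n

/-- The basis function
`p^((k(k-1)-n(n-1))/2) C(n,k)_{p,q} x^k ∏_{s=0}^{n-k-1} (p^s - q^s x)`,
where `p^((k(k-1)-n(n-1))/2)` is written as `p^(k(k-1)/2) / p^(n(n-1)/2)`. -/
noncomputable def pqBasis (p q : ℝ) (n k : ℕ) (x : ℝ) : ℝ :=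
  (p ^ (k.choose 2) / p ^ (n.choose 2)) * pqChoose p q n k * x ^ k *
    ∏ s ∈ Finset.range (n - k), (p ^ s - q ^ s * x)

/-- The (p,q)-Bernstein operator `B_{n,p,q}(f;x)`. -/
noncomputable def pqBernstein (p q : ℝ) (n : ℕ) (f : ℝ → ℝ) (x : ℝ) : ℝ :=
  ∑ k ∈ Finset.range (n + 1), pqBasis p q n k x * f (pqNode p q n k)

/-- The bivariate (p,q)-Bernstein operator
`B_{n,m}^{(p₁,q₁),(p₂,q₂)}(f;x,y)`. -/
noncomputable def pqBernstein2 (p₁ q₁ p₂ q₂ : ℝ) (n m : ℕ)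
    (f : ℝ → ℝ → ℝ) (x y : ℝ) : ℝ :=
  ∑ k ∈ Finset.range (n + 1), ∑ j ∈ Finset.range (m + 1),
    pqBasis p₁ q₁ n k x * pqBasis p₂ q₂ m j y *
      f (pqNode p₁ q₁ n k) (pqNode p₂ q₂ m j)

lemma pqInt_zero (p q : ℝ) : pqInt p q 0 = 0 := by simp [pqInt]

lemma pqInt_one (p q : ℝ) : pqInt p q 1 = 1 := by simp [pqInt]

lemma pqInt_succ (p q : ℝ) (n : ℕ) : pqInt p q (n + 1) = p ^ n + q * pqInt p q n := by
  unfold pqInt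
  rw [Finset.sum_range_succ']
  have h : ∀ i ∈ Finset.range n,
      p ^ (n + 1 - 1 - (i + 1)) * q ^ (i + 1) = q * (p ^ (n - 1 - i) * q ^ i) := by
    intro i hi
    rw [show n + 1 - 1 - (i + 1) = n - 1 - i by omega, pow_succ]
    ring
  rw [Finset.sum_congr rfl h, ← Finset.mul_sum]
  simp [add_comm]

lemma pqInt_pos {p q : ℝ} (hq : 0 < q) (hqp : q < p) (n : ℕ) : 0 < pqInt p q (n + 1) := by
  have hp : 0 < p := hq.trans hqp
  induction n with
  | zero => simp [pqInt_one]
  | succ m ih => rw [pqInt_succ]; exact add_pos (pow_pos hp _) (mul_pos hq ih)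

lemma pqInt_add (p q : ℝ) (a b : ℕ) :
    pqInt p q (a + b) = p ^ a * pqInt p q b + q ^ b * pqInt p q a := by
  induction b with
  | zero => simp [pqInt_zero]
  | succ b ih =>
    rw [show a + (b + 1) = (a + b) + 1 by omega, pqInt_succ, ih, pqInt_succ, pow_add, pow_succ]
    ring

lemma pqFactorial_zero (p q : ℝ) : pqFactorial p q 0 = 1 := by simp [pqFactorial]

lemma pqFactorial_succ (p q : ℝ) (n : ℕ) :
    pqFactorial p q (n + 1) = pqFactorial p q n * pqInt p q (n + 1) := by
  simp [pqFactorial, Finset.prod_range_succ]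

lemma pqFactorial_pos {p q : ℝ} (hq : 0 < q) (hqp : q < p) (n : ℕ) : 0 < pqFactorial p q n := by
  induction n with
  | zero => simp [pqFactorial_zero]
  | succ m ih => rw [pqFactorial_succ]; exact mul_pos ih (pqInt_pos hq hqp m)

lemma pqChoose_zero {p q : ℝ} (hq : 0 < q) (hqp : q < p) (n : ℕ) : pqChoose p q n 0 = 1 := by
  unfold pqChoose
  rw [pqFactorial_zero, Nat.sub_zero, one_mul, div_self (pqFactorial_pos hq hqp n).ne']

lemma pqChoose_self {p q : ℝ} (hq : 0 < q) (hqp : q < p) (n : ℕ) : pqChoose p q n n = 1 := by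
  unfold pqChoose
  rw [Nat.sub_self, pqFactorial_zero, mul_one, div_self (pqFactorial_pos hq hqp n).ne']

lemma pqChoose_mul {p q : ℝ} (hq : 0 < q) (hqp : q < p) (n k : ℕ) :
    pqInt p q (k + 1) * pqChoose p q (n + 1) (k + 1) = pqInt p q (n + 1) * pqChoose p q n k := by
  unfold pqChoose
  rw [pqFactorial_succ p q n, pqFactorial_succ p q k, Nat.succ_sub_succ]
  have h1 := (pqFactorial_pos hq hqp n).ne'
  have h2 := (pqFactorial_pos hq hqp k).ne'
  have h3 := (pqFactorial_pos hq hqp (n - k)).ne'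
  have h4 := (pqInt_pos hq hqp k).ne'
  field_simp

lemma pqChoose_pascal {p q : ℝ} (hq : 0 < q) (hqp : q < p) {n k : ℕ} (hk : k < n) :
    pqChoose p q (n + 1) (k + 1) =
      p ^ (k + 1) * pqChoose p q n (k + 1) + q ^ (n - k) * pqChoose p q n k := by
  obtain ⟨d, rfl⟩ : ∃ d, n = k + 1 + d := ⟨n - (k + 1), by omega⟩
  have e1 : k + 1 + d - (k + 1) = d := by omega
  have e2 : k + 1 + d + 1 - (k + 1) = d + 1 := by omega
  have e3 : k + 1 + d - k = d + 1 := by omega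
  unfold pqChoose
  rw [e1, e2, e3, pqFactorial_succ p q (k + 1 + d), pqFactorial_succ p q k,
    pqFactorial_succ p q d, show k + 1 + d + 1 = (k + 1) + (d + 1) by omega,
    pqInt_add p q (k + 1) (d + 1)]
  have h1 := (pqFactorial_pos hq hqp (k + 1 + d)).ne'
  have h2 := (pqFactorial_pos hq hqp k).ne'
  have h3 := (pqFactorial_pos hq hqp d).ne'
  have h4 := (pqInt_pos hq hqp k).ne'
  have h5 := (pqInt_pos hq hqp d).ne'
  field_simp

lemma choose_two_succ (k : ℕ) : (k + 1).choose 2 = k.choose 2 + k := by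
  rw [Nat.choose_succ_succ]
  simp [Nat.choose_one_right, Nat.add_comm]

lemma pq_key0 {p q : ℝ} (hq : 0 < q) (hqp : q < p) (x : ℝ) (n : ℕ) :
    ∑ k ∈ Finset.range (n + 1),
      p ^ (k.choose 2) * pqChoose p q n k * x ^ k *
        ∏ s ∈ Finset.range (n - k), (p ^ s - q ^ s * x) = p ^ (n.choose 2) := by
  induction n with
  | zero => simp [pqChoose_self hq hqp]
  | succ n ih =>
    set F : ℕ → ℕ → ℝ := fun m k =>
      p ^ (k.choose 2) * pqChoose p q m k * x ^ k *
        ∏ s ∈ Finset.range (m - k), (p ^ s - q ^ s * x) with hF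
    set B : ℕ → ℝ := fun k =>
      p ^ ((k + 1).choose 2) * q ^ (n - k) * pqChoose p q n k * x ^ (k + 1) *
        ∏ s ∈ Finset.range (n - k), (p ^ s - q ^ s * x) with hB
    have hterm : ∀ k < n, F (n + 1) (k + 1) = p ^ n * F n (k + 1) + (B k - B (k + 1)) := by
      intro k hk
      obtain ⟨d, rfl⟩ : ∃ d, n = k + 1 + d := ⟨n - (k + 1), by omega⟩
      have e1 : k + 1 + d + 1 - (k + 1) = d + 1 := by omega
      have e2 : k + 1 + d - (k + 1) = d := by omega
      have e3 : k + 1 + d - k = d + 1 := by omega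
      simp only [hF, hB]
      rw [pqChoose_pascal hq hqp (by omega : k < k + 1 + d)]
      simp only [e1, e2, e3]
      rw [Finset.prod_range_succ, choose_two_succ (k + 1), choose_two_succ k]
      simp only [pow_add, pow_succ]
      ring
    -- main computation
    have hsplit : ∑ k ∈ Finset.range (n + 2), F (n + 1) k
        = (∑ k ∈ Finset.range n, F (n + 1) (k + 1) + F (n + 1) 0) + F (n + 1) (n + 1) := by
      rw [Finset.sum_range_succ, Finset.sum_range_succ']
    have hmid : ∑ k ∈ Finset.range n, F (n + 1) (k + 1)
        = p ^ n * (∑ k ∈ Finset.range n, F n (k + 1)) + (B 0 - B n) := by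
      rw [Finset.mul_sum, ← Finset.sum_range_sub' B n, ← Finset.sum_add_distrib]
      exact Finset.sum_congr rfl fun k hk => hterm k (Finset.mem_range.mp hk)
    have hsum_n : ∑ k ∈ Finset.range n, F n (k + 1)
        = p ^ (n.choose 2) - F n 0 := by
      have := Finset.sum_range_succ' (fun k => F n k) n
      rw [show n + 1 = n + 1 from rfl] at this
      have ih' : ∑ k ∈ Finset.range (n + 1), F n k = p ^ (n.choose 2) := ih
      rw [this] at ih'
      linarith
    have hF0 : F n 0 = ∏ s ∈ Finset.range n, (p ^ s - q ^ s * x) := by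
      simp [hF, pqChoose_zero hq hqp]
    have hFn10 : F (n + 1) 0 = (∏ s ∈ Finset.range n, (p ^ s - q ^ s * x)) * (p ^ n - q ^ n * x) := by
      simp [hF, pqChoose_zero hq hqp, Finset.prod_range_succ]
    have hB0 : B 0 = q ^ n * x * ∏ s ∈ Finset.range n, (p ^ s - q ^ s * x) := by
      simp [hB, pqChoose_zero hq hqp]
    have hBn : B n = p ^ ((n + 1).choose 2) * x ^ (n + 1) := by
      simp [hB, pqChoose_self hq hqp]
    have hFtop : F (n + 1) (n + 1) = p ^ ((n + 1).choose 2) * x ^ (n + 1) := by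
      simp [hF, pqChoose_self hq hqp]
    rw [hsplit, hmid, hsum_n, hF0, hFn10, hB0, hBn, hFtop, choose_two_succ n, pow_add]
    ring

lemma pqBasis_sum {p q : ℝ} (hq : 0 < q) (hqp : q < p) (x : ℝ) (n : ℕ) :
    ∑ k ∈ Finset.range (n + 1), pqBasis p q n k x = 1 := by
  have hp : (0:ℝ) < p := hq.trans hqp
  have h : ∀ k ∈ Finset.range (n + 1), pqBasis p q n k x
      = (p ^ (k.choose 2) * pqChoose p q n k * x ^ k *
          ∏ s ∈ Finset.range (n - k), (p ^ s - q ^ s * x)) / p ^ (n.choose 2) := by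
    intro k _
    unfold pqBasis
    ring
  rw [Finset.sum_congr rfl h, ← Finset.sum_div, pq_key0 hq hqp,
    div_self (pow_pos hp _).ne']

lemma pqBasis_node {p q : ℝ} (hq : 0 < q) (hqp : q < p) (x : ℝ) {N k : ℕ} (hk : k ≤ N) :
    pqBasis p q (N + 1) (k + 1) x * pqNode p q (N + 1) (k + 1) = x * pqBasis p q N k x := by
  have hp : (0:ℝ) < p := hq.trans hqp
  have hN1 := (pqInt_pos hq hqp N).ne'
  unfold pqBasis pqNode
  rw [Nat.succ_sub_succ]
  have key := pqChoose_mul hq hqp N k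
  have e1 : (k + 1).choose 2 = k.choose 2 + k := choose_two_succ k
  have e2 : (N + 1).choose 2 = N.choose 2 + N := choose_two_succ N
  have e3 : N - k + k = N := by omega
  calc (p ^ ((k+1).choose 2) / p ^ ((N+1).choose 2)) * pqChoose p q (N+1) (k+1) * x ^ (k+1) *
        (∏ s ∈ Finset.range (N - k), (p ^ s - q ^ s * x)) *
        (p ^ (N - k) * pqInt p q (k+1) / pqInt p q (N+1))
      = (p ^ ((k+1).choose 2) * p ^ (N - k) / p ^ ((N+1).choose 2)) *
        (pqInt p q (k+1) * pqChoose p q (N+1) (k+1)) / pqInt p q (N+1) * x ^ (k+1) *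
        (∏ s ∈ Finset.range (N - k), (p ^ s - q ^ s * x)) := by ring
    _ = (p ^ ((k+1).choose 2) * p ^ (N - k) / p ^ ((N+1).choose 2)) *
        (pqInt p q (N+1) * pqChoose p q N k) / pqInt p q (N+1) * x ^ (k+1) *
        (∏ s ∈ Finset.range (N - k), (p ^ s - q ^ s * x)) := by rw [key]
    _ = x * ((p ^ (k.choose 2) / p ^ (N.choose 2)) * pqChoose p q N k * x ^ k *
        ∏ s ∈ Finset.range (N - k), (p ^ s - q ^ s * x)) := by
        rw [e1, e2]
        have : p ^ (k.choose 2 + k) * p ^ (N - k) = p ^ (k.choose 2) * p ^ N := by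
          rw [← pow_add, ← pow_add]
          congr 1
          omega
        field_simp
        rw [this, pow_add]
        ring

lemma pq_sum_node_mul {p q : ℝ} (hq : 0 < q) (hqp : q < p) (x : ℝ) (N : ℕ) :
    ∑ k ∈ Finset.range (N + 1), pqBasis p q N k x * (p ^ (N - k) * pqInt p q k)
      = pqInt p q N * x := by
  cases N with
  | zero => simp [pqInt_zero]
  | succ M =>
    rw [Finset.sum_range_succ']
    have h0 : pqBasis p q (M+1) 0 x * (p ^ (M + 1 - 0) * pqInt p q 0) = 0 := by
      simp [pqInt_zero]
    rw [h0, add_zero]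
    have hM1 := (pqInt_pos hq hqp M).ne'
    have h : ∀ k ∈ Finset.range (M + 1),
        pqBasis p q (M+1) (k+1) x * (p ^ (M + 1 - (k+1)) * pqInt p q (k+1))
        = pqInt p q (M+1) * (x * pqBasis p q M k x) := by
      intro k hk
      rw [Finset.mem_range] at hk
      have := pqBasis_node hq hqp x (Nat.lt_succ_iff.mp hk)
      rw [← this]
      unfold pqNode
      rw [Nat.succ_sub_succ]
      field_simp
    rw [Finset.sum_congr rfl h, ← Finset.mul_sum, ← Finset.mul_sum,
      pqBasis_sum hq hqp x M]
    ring

lemma pq_sum_node {p q : ℝ} (hq : 0 < q) (hqp : q < p) (x : ℝ) {n : ℕ} (hn : 1 ≤ n) :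
    ∑ k ∈ Finset.range (n + 1), pqBasis p q n k x * pqNode p q n k = x := by
  obtain ⟨N, rfl⟩ : ∃ N, n = N + 1 := ⟨n - 1, by omega⟩
  have hn1 := (pqInt_pos hq hqp N).ne'
  have h : ∀ k ∈ Finset.range (N + 2),
      pqBasis p q (N+1) k x * pqNode p q (N+1) k
      = (pqBasis p q (N+1) k x * (p ^ (N + 1 - k) * pqInt p q k)) / pqInt p q (N+1) := by
    intro k _
    unfold pqNode
    ring
  rw [Finset.sum_congr rfl h, ← Finset.sum_div, pq_sum_node_mul hq hqp x (N+1),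
    mul_comm, mul_div_assoc, div_self hn1, mul_one]

lemma pq_sum_node_sq {p q : ℝ} (hq : 0 < q) (hqp : q < p) (x : ℝ) (N : ℕ) :
    ∑ k ∈ Finset.range (N + 2), pqBasis p q (N+1) k x * (pqNode p q (N+1) k) ^ 2
      = (p ^ N / pqInt p q (N+1)) * x + (q * pqInt p q N / pqInt p q (N+1)) * x ^ 2 := by
  have hp : (0:ℝ) < p := hq.trans hqp
  have hN1 := (pqInt_pos hq hqp N).ne'
  rw [Finset.sum_range_succ']
  have h0 : pqBasis p q (N+1) 0 x * (pqNode p q (N+1) 0) ^ 2 = 0 := by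
    simp [pqNode, pqInt_zero]
  rw [h0, add_zero]
  have h : ∀ k ∈ Finset.range (N + 1),
      pqBasis p q (N+1) (k+1) x * (pqNode p q (N+1) (k+1)) ^ 2
      = (p ^ N / pqInt p q (N+1)) * (x * pqBasis p q N k x)
        + (q * x / pqInt p q (N+1)) * (pqBasis p q N k x * (p ^ (N - k) * pqInt p q k)) := by
    intro k hk
    rw [Finset.mem_range] at hk
    have hkN : k ≤ N := Nat.lt_succ_iff.mp hk
    have hbn := pqBasis_node hq hqp x hkN
    rw [sq, ← mul_assoc, hbn]
    unfold pqNode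
    rw [Nat.succ_sub_succ, pqInt_succ]
    have e : p ^ (N - k) * p ^ k = p ^ N := by rw [← pow_add]; congr 1; omega
    have h2 : p ^ (N - k) * (p ^ k + q * pqInt p q k)
        = p ^ N + q * (p ^ (N - k) * pqInt p q k) := by rw [mul_add, e]; ring
    rw [h2]
    field_simp
  rw [Finset.sum_congr rfl h, Finset.sum_add_distrib, ← Finset.mul_sum, ← Finset.mul_sum,
    ← Finset.mul_sum, pqBasis_sum hq hqp x N, pq_sum_node_mul hq hqp x N]
  field_simp

theorem pqBernstein2_moments (p₁ q₁ p₂ q₂ : ℝ) (n m : ℕ)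
    (hq₁ : 0 < q₁) (hq₁p₁ : q₁ < p₁) (hp₁ : p₁ ≤ 1)
    (hq₂ : 0 < q₂) (hq₂p₂ : q₂ < p₂) (hp₂ : p₂ ≤ 1)
    (hn : 1 ≤ n) (hm : 1 ≤ m)
    (x y : ℝ) (hx : x ∈ Set.Icc (0 : ℝ) 1) (hy : y ∈ Set.Icc (0 : ℝ) 1) :
    pqBernstein2 p₁ q₁ p₂ q₂ n m (fun _ _ => 1) x y = 1 ∧
    pqBernstein2 p₁ q₁ p₂ q₂ n m (fun s _ => s) x y = x ∧
    pqBernstein2 p₁ q₁ p₂ q₂ n m (fun _ t => t) x y = y ∧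
    pqBernstein2 p₁ q₁ p₂ q₂ n m (fun s t => s * t) x y = x * y ∧
    pqBernstein2 p₁ q₁ p₂ q₂ n m (fun s _ => s ^ 2) x y =
      (p₁ ^ (n - 1) / pqInt p₁ q₁ n) * x +
      (q₁ * pqInt p₁ q₁ (n - 1) / pqInt p₁ q₁ n) * x ^ 2 ∧
    pqBernstein2 p₁ q₁ p₂ q₂ n m (fun _ t => t ^ 2) x y =
      (p₂ ^ (m - 1) / pqInt p₂ q₂ m) * y +
      (q₂ * pqInt p₂ q₂ (m - 1) / pqInt p₂ q₂ m) * y ^ 2 := by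
  obtain ⟨N, rfl⟩ : ∃ N, n = N + 1 := ⟨n - 1, by omega⟩
  obtain ⟨M, rfl⟩ : ∃ M, m = M + 1 := ⟨m - 1, by omega⟩
  have sep : ∀ (g h : ℝ → ℝ) (f : ℝ → ℝ → ℝ), (∀ s t, f s t = g s * h t) →
      pqBernstein2 p₁ q₁ p₂ q₂ (N + 1) (M + 1) f x y =
        (∑ k ∈ Finset.range (N + 2), pqBasis p₁ q₁ (N + 1) k x * g (pqNode p₁ q₁ (N + 1) k)) *
        (∑ j ∈ Finset.range (M + 2), pqBasis p₂ q₂ (M + 1) j y * h (pqNode p₂ q₂ (M + 1) j)) := by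
    intro g h f hf
    unfold pqBernstein2
    rw [Finset.sum_mul_sum]
    exact Finset.sum_congr rfl fun k _ => Finset.sum_congr rfl fun j _ => by rw [hf]; ring
  have s10 : ∑ k ∈ Finset.range (N + 2), pqBasis p₁ q₁ (N + 1) k x = 1 :=
    pqBasis_sum hq₁ hq₁p₁ x (N + 1)
  have s20 : ∑ j ∈ Finset.range (M + 2), pqBasis p₂ q₂ (M + 1) j y = 1 :=
    pqBasis_sum hq₂ hq₂p₂ y (M + 1)
  have s11 : ∑ k ∈ Finset.range (N + 2),
      pqBasis p₁ q₁ (N + 1) k x * pqNode p₁ q₁ (N + 1) k = x :=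
    pq_sum_node hq₁ hq₁p₁ x (by omega)
  have s21 : ∑ j ∈ Finset.range (M + 2),
      pqBasis p₂ q₂ (M + 1) j y * pqNode p₂ q₂ (M + 1) j = y :=
    pq_sum_node hq₂ hq₂p₂ y (by omega)
  refine ⟨?_, ?_, ?_, ?_, ?_, ?_⟩
  · rw [sep (fun _ => 1) (fun _ => 1) _ (fun s t => (one_mul (1:ℝ)).symm)]
    simp only [mul_one]
    rw [s10, s20, mul_one]
  · rw [sep (fun s => s) (fun _ => 1) _ (fun s t => (mul_one s).symm)]
    simp only [mul_one]
    rw [s11, s20, mul_one]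
  · rw [sep (fun _ => 1) (fun t => t) _ (fun s t => (one_mul t).symm)]
    simp only [one_mul, mul_one]
    rw [s21, s10, one_mul]
  · rw [sep (fun s => s) (fun t => t) _ (fun s t => rfl)]
    rw [s11, s21]
  · rw [sep (fun s => s ^ 2) (fun _ => 1) _ (fun s t => (mul_one (s ^ 2)).symm)]
    simp only [mul_one]
    rw [s20, mul_one, pq_sum_node_sq hq₁ hq₁p₁ x N]
    simp
  · rw [sep (fun _ => 1) (fun t => t ^ 2) _ (fun s t => (one_mul (t ^ 2)).symm)]
    simp only [one_mul, mul_one]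
    rw [s10, one_mul, pq_sum_node_sq hq₂ hq₂p₂ y M]
    simp
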